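/- arXiv:1311.4262 — 8 statements merged into one kernel-verified Lean document; each statement's English description precedes it below -/
import Mathlib

section
/- Let s be a nonzero complex number, y a complex number, x = s + s^{-1}, and let A = [[s,1],[0,s^{-1}]] and B = [[s,0],[2-y,s^{-1}]] be 2×2 complex matrices. For a positive integer m, set W = (B·A^{-1})^m·(B^{-1}·A)^m. Then the trace of W equals 2 + (y-2)(y+2-x^2)·S_{m-1}(y)^2. -/
open Real

/-- Auxiliary sequence for the Chebyshev-like polynomials on natural indices. -/
def Saux {R : Type*} [CommRing R] : ℕ → R → R
  | 0, _ => 1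
  | 1, z => z
  | (n + 2), z => z * Saux (n + 1) z - Saux n z

/-- The Chebyshev-like polynomials `S j` indexed by all integers `j`:
`S 0 z = 1`, `S 1 z = z`, and `S (j + 1) z = z * S j z - S (j - 1) z` for all `j : ℤ`
(so `S (-1) z = 0`, `S (-2) z = -1`, and in general `S (-j) z = -S (j - 2) z`). -/
def S {R : Type*} [CommRing R] (j : ℤ) (z : R) : R :=
  if 0 ≤ j then Saux j.toNat z
  else if j = -1 then 0
  else -Saux (-j - 2).toNat z

lemma S_neg_one {R : Type*} [CommRing R] (z : R) : S (-1) z = 0 := by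
  norm_num [S]

lemma S_coe {R : Type*} [CommRing R] (n : ℕ) (z : R) : S (n : ℤ) z = Saux n z := by
  simp [S]

lemma Saux_rec {R : Type*} [CommRing R] (k : ℕ) (z : R) :
    Saux (k + 1) z = z * Saux k z - S ((k : ℤ) - 1) z := by
  cases k with
  | zero => simp [Saux, S_neg_one]
  | succ n =>
    have : ((n : ℤ) + 1 - 1) = (n : ℤ) := by ring
    rw [show ((n + 1 : ℕ) : ℤ) - 1 = (n : ℤ) by push_cast; ring, S_coe]
    rfl

lemma key_id {R : Type*} [CommRing R] (y : R) :
    ∀ k : ℕ, (Saux k y) ^ 2 + (S ((k : ℤ) - 1) y) ^ 2 - y * Saux k y * S ((k : ℤ) - 1) y = 1 := by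
  intro k
  induction k with
  | zero => simp [Saux, S_neg_one]
  | succ n ih =>
    rw [Saux_rec, show ((n + 1 : ℕ) : ℤ) - 1 = (n : ℤ) by push_cast; ring, S_coe]
    ring_nf
    ring_nf at ih
    linear_combination ih

lemma pow_form {y : ℂ} (C : Matrix (Fin 2) (Fin 2) ℂ) (hC : C ^ 2 = y • C - 1) :
    ∀ k : ℕ, C ^ (k + 1) = Saux k y • C - S ((k : ℤ) - 1) y • 1 := by
  intro k
  induction k with
  | zero => simp [Saux, S_neg_one]
  | succ n ih =>
    have h2 : C * C = y • C - 1 := by rw [← sq]; exact hC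
    rw [pow_succ, ih, Saux_rec, show ((n + 1 : ℕ) : ℤ) - 1 = (n : ℤ) by push_cast; ring, S_coe]
    rw [sub_mul, smul_mul_assoc, smul_mul_assoc, h2, one_mul]
    rw [smul_sub, smul_smul]
    module

theorem stmt1 (s y x : ℂ) (hs : s ≠ 0) (hx : x = s + s⁻¹) (m : ℕ) (hm : 0 < m)
    (A B W : Matrix (Fin 2) (Fin 2) ℂ)
    (hA : A = !![s, 1; 0, s⁻¹]) (hB : B = !![s, 0; 2 - y, s⁻¹])
    (hW : W = (B * A⁻¹) ^ m * (B⁻¹ * A) ^ m) :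
    Matrix.trace W = 2 + (y - 2) * (y + 2 - x ^ 2) * S ((m : ℤ) - 1) y ^ 2 := by
  obtain ⟨k, rfl⟩ : ∃ k, m = k + 1 := ⟨m - 1, (Nat.succ_pred_eq_of_pos hm).symm⟩
  have hss : s * s⁻¹ = 1 := mul_inv_cancel₀ hs
  have hss' : s⁻¹ * s = 1 := inv_mul_cancel₀ hs
  have hAinv : A⁻¹ = !![s⁻¹, -1; 0, s] := by
    apply Matrix.inv_eq_right_inv
    rw [hA, Matrix.mul_fin_two, Matrix.one_fin_two]
    congr 1 <;> simp [hss, hss'] <;> ring_nf <;> simp [hss, hss']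
  have hBinv : B⁻¹ = !![s⁻¹, 0; -(2 - y) , s] := by
    apply Matrix.inv_eq_right_inv
    rw [hB, Matrix.mul_fin_two, Matrix.one_fin_two]
    congr 1 <;> field_simp <;> ring
  have hC : B * A⁻¹ = !![1, -s; (2 - y) * s⁻¹, y - 1] := by
    rw [hB, hAinv, Matrix.mul_fin_two]
    congr 1 <;> field_simp <;> ring
  have hD : B⁻¹ * A = !![1, s⁻¹; (y - 2) * s, y - 1] := by
    rw [hBinv, hA, Matrix.mul_fin_two]
    congr 1 <;> field_simp <;> ring
  set C : Matrix (Fin 2) (Fin 2) ℂ := !![1, -s; (2 - y) * s⁻¹, y - 1] with hCdef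
  set D : Matrix (Fin 2) (Fin 2) ℂ := !![1, s⁻¹; (y - 2) * s, y - 1] with hDdef
  have hC2 : C ^ 2 = y • C - 1 := by
    rw [hCdef, sq, Matrix.mul_fin_two, Matrix.one_fin_two]
    ext i j
    fin_cases i <;> fin_cases j <;>
      simp [Matrix.smul_apply, Matrix.sub_apply]
    all_goals first
      | ring1
      | linear_combination (y - 2) * hss
  have hD2 : D ^ 2 = y • D - 1 := by
    rw [hDdef, sq, Matrix.mul_fin_two, Matrix.one_fin_two]
    ext i j
    fin_cases i <;> fin_cases j <;>
      simp [Matrix.smul_apply, Matrix.sub_apply]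
    all_goals first
      | ring1
      | linear_combination (y - 2) * hss
  set u : ℂ := Saux k y with hu
  set v : ℂ := S ((k : ℤ) - 1) y with hv
  have hid : u ^ 2 + v ^ 2 - y * u * v = 1 := key_id y k
  have hSm : S (((k + 1 : ℕ) : ℤ) - 1) y = u := by
    rw [show ((k + 1 : ℕ) : ℤ) - 1 = (k : ℤ) by push_cast; ring, S_coe]
  rw [hW, hC, hD, pow_form C hC2 k, pow_form D hD2 k, hSm]
  rw [← hu, ← hv]
  rw [Matrix.trace_fin_two]
  simp only [Matrix.sub_mul, Matrix.mul_sub, Matrix.smul_mul, Matrix.mul_smul,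
    Matrix.mul_one, Matrix.one_mul, Matrix.sub_apply, Matrix.smul_apply,
    Matrix.mul_apply, Fin.sum_univ_two, hCdef, hDdef, Matrix.one_apply,
    Matrix.cons_val', Matrix.cons_val_zero, Matrix.cons_val_one, Matrix.head_cons,
    Matrix.head_fin_const, Matrix.empty_val', Matrix.cons_val_fin_one, Matrix.of_apply,
    smul_eq_mul]
  subst hx
  simp only [zero_ne_one, one_ne_zero, ↓reduceIte]
  field_simp
  ring_nf
  ring_nf at hid
  linear_combination (2 * s ^ 2) * hid
end

section
/- Let s be a nonzero complex number, y a complex number, x = s + s^{-1}, and let A = [[s,1],[0,s^{-1}]] and B = [[s,0],[2-y,s^{-1}]] be 2×2 complex matrices. For a positive integer m, set W = (B·A^{-1})^m·(B·A)·(B^{-1}·A)^m. Then the trace of W equals x^2 - y - (y-2)(y+2-x^2)·S_m(y)·S_{m-1}(y). -/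
open Real

/-- `Scoef n = Saux (n-1)`, with `Scoef 0 = 0`. -/
def Scoef {R : Type*} [CommRing R] : ℕ → R → R
  | 0, _ => 0
  | (n + 1), z => Saux n z

lemma Saux_succ_eq {R : Type*} [CommRing R] (t : R) :
    ∀ n, Saux (n + 1) t = t * Saux n t - Scoef n t
  | 0 => by simp [Saux, Scoef]
  | (n + 1) => by simp [Saux, Scoef]

lemma Saux_det {R : Type*} [CommRing R] (t : R) :
    ∀ n, Saux n t ^ 2 + Scoef n t ^ 2 - t * Saux n t * Scoef n t = 1
  | 0 => by simp [Saux, Scoef]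
  | (n + 1) => by
    have h := Saux_det t n
    have h2 : (Scoef (n + 1) t : R) = Saux n t := rfl
    rw [h2, Saux_succ_eq t n]
    linear_combination h

lemma smul_fin2 {R : Type*} [CommRing R] (a p q r t : R) :
    a • !![p,q;r,t] = !![a*p,a*q;a*r,a*t] := by
  ext i j; fin_cases i <;> fin_cases j <;> simp

lemma sub_fin2 {R : Type*} [CommRing R] (a b c d e f g h : R) :
    !![a,b;c,d] - !![e,f;g,h] = !![a-e,b-f;c-g,d-h] := by
  ext i j; fin_cases i <;> fin_cases j <;> simp

lemma pow_succ_eq {R : Type*} [CommRing R] (P : Matrix (Fin 2) (Fin 2) R) (t : R)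
    (h : P * P = t • P - 1) :
    ∀ n, P ^ (n + 1) = Saux n t • P - Scoef n t • 1
  | 0 => by simp [Saux, Scoef]
  | (n + 1) => by
    rw [pow_succ, pow_succ_eq P t h n, sub_mul, smul_mul_assoc, smul_mul_assoc, h, one_mul,
      Saux_succ_eq]
    simp only [smul_sub, smul_smul, Scoef]
    module

set_option maxHeartbeats 1000000 in
theorem stmt2 (s y x : ℂ) (hs : s ≠ 0) (hx : x = s + s⁻¹) (m : ℕ) (hm : 0 < m)
    (A B W : Matrix (Fin 2) (Fin 2) ℂ)
    (hA : A = !![s, 1; 0, s⁻¹]) (hB : B = !![s, 0; 2 - y, s⁻¹])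
    (hW : W = (B * A⁻¹) ^ m * (B * A) * (B⁻¹ * A) ^ m) :
    Matrix.trace W = x ^ 2 - y - (y - 2) * (y + 2 - x ^ 2) * S (m : ℤ) y * S ((m : ℤ) - 1) y := by
  obtain ⟨k, rfl⟩ : ∃ k, m = k + 1 := ⟨m - 1, (Nat.succ_pred_eq_of_pos hm).symm⟩
  have hss : s * s⁻¹ = 1 := mul_inv_cancel₀ hs
  have hAinv : A⁻¹ = !![s⁻¹, -1; 0, s] := by
    apply Matrix.inv_eq_right_inv
    rw [hA, Matrix.mul_fin_two, Matrix.one_fin_two]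
    ext i j; fin_cases i <;> fin_cases j <;> (try simp) <;> (try field_simp) <;> (try ring)
  have hBinv : B⁻¹ = !![s⁻¹, 0; y - 2, s] := by
    apply Matrix.inv_eq_right_inv
    rw [hB, Matrix.mul_fin_two, Matrix.one_fin_two]
    ext i j; fin_cases i <;> fin_cases j <;> (try simp) <;> (try field_simp) <;> (try ring)
  have hM : B * A⁻¹ = !![1, -s; (2 - y) * s⁻¹, y - 1] := by
    rw [hB, hAinv, Matrix.mul_fin_two]
    ext i j; fin_cases i <;> fin_cases j <;> (try simp) <;> (try field_simp) <;> (try ring)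
  have hN : B⁻¹ * A = !![1, s⁻¹; (y - 2) * s, y - 1] := by
    rw [hBinv, hA, Matrix.mul_fin_two]
    ext i j; fin_cases i <;> fin_cases j <;> (try simp) <;> (try field_simp) <;> (try ring)
  have hC : B * A = !![s * s, s; (2 - y) * s, 2 - y + s⁻¹ * s⁻¹] := by
    rw [hB, hA, Matrix.mul_fin_two]
    ext i j; fin_cases i <;> fin_cases j <;> (try simp) <;> (try field_simp) <;> (try ring)
  have hM2 : (B * A⁻¹) * (B * A⁻¹) = y • (B * A⁻¹) - 1 := by
    rw [hM, Matrix.mul_fin_two, smul_fin2, Matrix.one_fin_two, sub_fin2]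
    ext i j; fin_cases i <;> fin_cases j <;> (try simp) <;> (try field_simp) <;> (try ring)
  have hN2 : (B⁻¹ * A) * (B⁻¹ * A) = y • (B⁻¹ * A) - 1 := by
    rw [hN, Matrix.mul_fin_two, smul_fin2, Matrix.one_fin_two, sub_fin2]
    ext i j; fin_cases i <;> fin_cases j <;> (try simp) <;> (try field_simp) <;> (try ring)
  set a : ℂ := Saux k y with ha
  set b : ℂ := Scoef k y with hb
  have hSm : S ((k + 1 : ℕ) : ℤ) y = y * a - b := by
    rw [S, if_pos (by positivity)]
    simp only [Int.toNat_natCast]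
    exact Saux_succ_eq y k
  have hSm1 : S (((k + 1 : ℕ) : ℤ) - 1) y = a := by
    have : ((k + 1 : ℕ) : ℤ) - 1 = (k : ℤ) := by push_cast; ring
    rw [this, S, if_pos (Int.natCast_nonneg k), Int.toNat_natCast]
  rw [hSm, hSm1, hW, pow_succ_eq _ _ hM2, pow_succ_eq _ _ hN2, ← ha, ← hb, hM, hN, hC, hx,
    Matrix.one_fin_two]
  simp only [smul_fin2, sub_fin2, Matrix.mul_fin_two, Matrix.trace_fin_two_of]
  have hdet : a ^ 2 + b ^ 2 - y * a * b = 1 := Saux_det y k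
  field_simp
  linear_combination (1 + 2 * s ^ 2 + s ^ 4 - s ^ 2 * y) * hdet
end

section
/- Let m be a positive integer and let x, y be complex numbers. Define λ = 2 + (y-2)(y+2-x^2)·S_{m-1}(y)^2 and α = 1 - (y+2-x^2)·S_{m-1}(y)·(S_{m-1}(y) - S_{m-2}(y)). Then α^2 - α·λ + 1 = (y+2-x^2)·S_{m-1}(y)^2·(λ+2-x^2). -/
open Real

lemma Saux_identity {R : Type*} [CommRing R] (z : R) :
    ∀ n : ℕ, Saux (n + 1) z ^ 2 + Saux n z ^ 2 - z * Saux (n + 1) z * Saux n z = 1 := by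
  intro n
  induction n with
  | zero => simp [Saux]; ring
  | succ k ih =>
    have h : Saux (k + 2) z = z * Saux (k + 1) z - Saux k z := rfl
    rw [h]
    linear_combination ih

theorem stmt5 (m : ℕ) (hm : 0 < m) (x y lam alp : ℂ)
    (hlam : lam = 2 + (y - 2) * (y + 2 - x ^ 2) * S ((m : ℤ) - 1) y ^ 2)
    (halp : alp = 1 - (y + 2 - x ^ 2) * S ((m : ℤ) - 1) y * (S ((m : ℤ) - 1) y - S ((m : ℤ) - 2) y)) :
    alp ^ 2 - alp * lam + 1 = (y + 2 - x ^ 2) * S ((m : ℤ) - 1) y ^ 2 * (lam + 2 - x ^ 2) := by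
  have key : S ((m : ℤ) - 1) y ^ 2 + S ((m : ℤ) - 2) y ^ 2
      - y * S ((m : ℤ) - 1) y * S ((m : ℤ) - 2) y = 1 := by
    rcases Nat.exists_eq_add_of_lt hm with ⟨k, hk⟩
    subst hk
    rcases Nat.eq_zero_or_pos k with hk0 | hk0
    · subst hk0
      norm_num [S, Saux]
    · have h1 : ((0 + k + 1 : ℕ) : ℤ) - 1 = ((k : ℕ) : ℤ) := by push_cast; ring
      have h2 : ((0 + k + 1 : ℕ) : ℤ) - 2 = ((k - 1 : ℕ) : ℤ) := by
        omega
      rw [h1, h2]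
      have hS1 : S ((k : ℕ) : ℤ) y = Saux k y := by
        simp [S]
      have hS2 : S ((k - 1 : ℕ) : ℤ) y = Saux (k - 1) y := by
        simp [S]
      rw [hS1, hS2]
      have hk1 : k = (k - 1) + 1 := by omega
      rw [hk1]
      simpa using Saux_identity y (k - 1)
  subst hlam halp
  linear_combination ((y + 2 - x ^ 2) * S ((m : ℤ) - 1) y) ^ 2 * key
end

section
/- Let m be a nonnegative integer and let x, y be complex numbers. Define λ = x^2 - y - (y-2)(y+2-x^2)·S_m(y)·S_{m-1}(y) and α = 1 + (y+2-x^2)·S_{m-1}(y)·(S_m(y) - S_{m-1}(y)). Then α^2 - α·λ + 1 = (1 + (y+2-x^2)·S_{m-1}(y)·S_m(y))·(2-λ). -/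
open Real

lemma Saux_pell {R : Type*} [CommRing R] (n : ℕ) (z : R) :
    Saux (n + 1) z ^ 2 + Saux n z ^ 2 - z * Saux (n + 1) z * Saux n z = 1 := by
  induction n with
  | zero => simp [Saux]; ring
  | succ k ih =>
    have h : Saux (k + 2) z = z * Saux (k + 1) z - Saux k z := rfl
    rw [h]; linear_combination ih

theorem stmt6 (m : ℕ) (x y lam alp : ℂ)
    (hlam : lam = x ^ 2 - y - (y - 2) * (y + 2 - x ^ 2) * S (m : ℤ) y * S ((m : ℤ) - 1) y)
    (halp : alp = 1 + (y + 2 - x ^ 2) * S ((m : ℤ) - 1) y * (S (m : ℤ) y - S ((m : ℤ) - 1) y)) :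
    alp ^ 2 - alp * lam + 1 =
      (1 + (y + 2 - x ^ 2) * S ((m : ℤ) - 1) y * S (m : ℤ) y) * (2 - lam) := by
  subst hlam halp
  cases m with
  | zero =>
    simp only [Nat.cast_zero, S]
    norm_num
    ring
  | succ k =>
    have h1 : S ((k + 1 : ℕ) : ℤ) y = Saux (k + 1) y := by
      rw [S, if_pos (by positivity)]
      norm_num
    have h2 : S (((k + 1 : ℕ) : ℤ) - 1) y = Saux k y := by
      have : ((k + 1 : ℕ) : ℤ) - 1 = (k : ℤ) := by push_cast; ring
      rw [this, S, if_pos (by positivity)]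
      norm_num
    rw [h1, h2]
    linear_combination ((y + 2 - x ^ 2) ^ 2 * Saux k y ^ 2) * Saux_pell k y
end

section
/- Let m be a nonnegative integer and let x, y be complex numbers. Define λ = x^2 - y - (y-2)(y+2-x^2)·S_m(y)·S_{m-1}(y). Then 2 - λ = (y+2-x^2)·(S_m(y) - S_{m-1}(y))^2. -/
open Real

theorem stmt11 (m : ℕ) (x y lam : ℂ)
    (hlam : lam = x ^ 2 - y - (y - 2) * (y + 2 - x ^ 2) * S (m : ℤ) y * S ((m : ℤ) - 1) y) :
    2 - lam = (y + 2 - x ^ 2) * (S (m : ℤ) y - S ((m : ℤ) - 1) y) ^ 2 := by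
  subst hlam
  have key : ∀ k : ℕ, (Saux (k+1) y)^2 - y * Saux (k+1) y * Saux k y + (Saux k y)^2 = 1 := by
    intro k
    induction k with
    | zero => simp [Saux]; ring
    | succ n ih =>
      have h : Saux (n+2) y = y * Saux (n+1) y - Saux n y := rfl
      rw [h]; linear_combination ih
  cases m with
  | zero =>
    simp [S, Saux]
    ring
  | succ n =>
    have hnn : (0:ℤ) ≤ ((n+1 : ℕ) : ℤ) := Int.natCast_nonneg _
    have h1 : S ((n+1 : ℕ) : ℤ) y = Saux (n+1) y := by
      unfold S; rw [if_pos hnn]; simp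
    have h2 : S (((n+1 : ℕ) : ℤ) - 1) y = Saux n y := by
      have he : ((n+1 : ℕ) : ℤ) - 1 = (n : ℤ) := by push_cast; ring
      rw [he]; unfold S; rw [if_pos (Int.natCast_nonneg _)]; simp
    rw [h1, h2]
    linear_combination (-(y + 2 - x^2)) * key n
end

section
/- Let m be a positive integer and n a nonzero integer, and let x, y be real numbers with |x| ≤ 2 and φ(x,y) = 0, where φ(x,y) = S_{n-1}(λ)·α - S_{n-2}(λ) with λ = 2 + (y-2)(y+2-x^2)·S_{m-1}(y)^2 and α = 1 - (y+2-x^2)·S_{m-1}(y)·(S_{m-1}(y) - S_{m-2}(y)). If |x| > 2·√(1 - 1/|4mn|), then y > 2. -/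
open Real

lemma Saux_two (k : ℕ) (z : ℝ) : Saux (k+2) z = z * Saux (k+1) z - Saux k z := rfl

lemma S_ofNat (k : ℕ) (z : ℝ) : S (k : ℤ) z = Saux k z := by simp [S]

lemma S_negone (z : ℝ) : S (-1) z = 0 := by simp [S]

lemma S_neg (k : ℕ) (z : ℝ) : S (-(k:ℤ)-2) z = -Saux k z := by
  have h1 : ¬ (0:ℤ) ≤ -(k:ℤ)-2 := by omega
  have h2 : ¬ (-(k:ℤ)-2 = -1) := by omega
  have h3 : (-(-(k:ℤ)-2) - 2).toNat = k := by omega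
  rw [S, if_neg h1, if_neg h2, h3]

lemma S_rec (j : ℤ) (z : ℝ) : S (j+1) z = z * S j z - S (j-1) z := by
  rcases j with k | k
  · rcases k with _ | k
    · show S 1 z = z * S 0 z - S (-1) z
      rw [S_negone]
      have h1 : S 1 z = Saux 1 z := S_ofNat 1 z
      rw [h1]
      have h0 : S 0 z = Saux 0 z := S_ofNat 0 z
      rw [h0]
      show z = z * 1 - 0
      ring
    · have e1 : ((Int.ofNat (k+1)) + 1) = ((k+2 : ℕ) : ℤ) := by simp; ring
      have e2 : (Int.ofNat (k+1)) = ((k+1 : ℕ) : ℤ) := by simp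
      have e3 : ((Int.ofNat (k+1)) - 1) = ((k : ℕ) : ℤ) := by simp
      rw [e1, e3, e2, S_ofNat, S_ofNat, S_ofNat, Saux_two]
  · rcases k with _ | ( _ | k)
    · have e1 : (Int.negSucc 0 + 1) = ((0:ℕ):ℤ) := by decide
      have e2 : (Int.negSucc 0) = -1 := rfl
      have e3 : (Int.negSucc 0 - 1) = -((0:ℕ):ℤ)-2 := by decide
      rw [e1, e3, e2, S_ofNat, S_negone, S_neg]
      show (1:ℝ) = z * 0 - (-1)
      ring
    · have e1 : (Int.negSucc 1 + 1) = (-1:ℤ) := by decide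
      have e2 : (Int.negSucc 1) = -((0:ℕ):ℤ)-2 := by decide
      have e3 : (Int.negSucc 1 - 1) = -((1:ℕ):ℤ)-2 := by decide
      rw [e1, e3, e2, S_negone, S_neg, S_neg]
      show (0:ℝ) = z * -(1:ℝ) - -(z)
      ring
    · have e1 : (Int.negSucc (k+2) + 1) = -((k:ℤ))-2 := by
        simp [Int.negSucc_eq]; ring
      have e2 : (Int.negSucc (k+2)) = -((k+1:ℕ):ℤ)-2 := by
        simp [Int.negSucc_eq]; push_cast; ring
      have e3 : (Int.negSucc (k+2) - 1) = -((k+2:ℕ):ℤ)-2 := by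
        simp [Int.negSucc_eq]; push_cast; ring
      rw [e1, e3, e2]
      have e4 : -((k:ℤ))-2 = -((k:ℕ):ℤ)-2 := by norm_cast
      rw [e4, S_neg, S_neg, S_neg, Saux_two]
      ring

lemma S_ident (z : ℝ) (j : ℤ) :
    S j z ^ 2 + S (j-1) z ^ 2 - z * S j z * S (j-1) z = 1 := by
  induction j using Int.induction_on with
  | zero =>
      have h0 : S (0:ℤ) z = 1 := S_ofNat 0 z
      have h1 : S ((0:ℤ)-1) z = 0 := S_negone z
      rw [h0, h1]; ring
  | succ k ih =>
      have h := S_rec k z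
      have e : ((k:ℤ)+1-1) = (k:ℤ) := by ring
      rw [e]
      linear_combination ih + (S ((k:ℤ)+1) z - S ((k:ℤ)-1) z) * h
  | pred k ih =>
      have h := S_rec (-(k:ℤ)-1) z
      have e1 : (-(k:ℤ)-1+1) = -(k:ℤ) := by ring
      rw [e1] at h
      linear_combination ih + (S (-(k:ℤ)-1-1) z - S (-(k:ℤ)) z) * h

lemma Saux_abs_le (z : ℝ) (hz : |z| ≤ 2) : ∀ k : ℕ, |Saux k z| ≤ (k:ℝ) + 1 := by
  intro k
  induction k with
  | zero =>
      have h : Saux 0 z = (1:ℝ) := rfl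
      rw [h]
      norm_num
  | succ k ih =>
      have hid := S_ident z ((k:ℤ)+1)
      have e : ((k:ℤ)+1-1) = ((k:ℕ):ℤ) := by ring
      rw [e] at hid
      have e2 : ((k:ℤ)+1) = (((k+1:ℕ)):ℤ) := by push_cast; ring
      rw [e2, S_ofNat, S_ofNat] at hid
      set a := Saux (k+1) z
      set b := Saux k z
      have step : |a| ≤ |b| + 1 := by
        have h1 : z*a*b ≤ 2 * (|a| * |b|) := by
          calc z*a*b ≤ |z*a*b| := le_abs_self _
          _ = |z| * |a| * |b| := by rw [abs_mul, abs_mul]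
          _ ≤ 2 * (|a| * |b|) := by
              nlinarith [abs_nonneg a, abs_nonneg b, mul_nonneg (abs_nonneg a) (abs_nonneg b)]
        nlinarith [sq_abs a, sq_abs b, abs_nonneg a, abs_nonneg b]
      calc |a| ≤ |b| + 1 := step
      _ ≤ ((k:ℝ) + 1) + 1 := by linarith
      _ = ((k+1:ℕ):ℝ) + 1 := by push_cast; ring

lemma S_sq_le (z : ℝ) (hz : |z| ≤ 2) (n : ℤ) (hn : n ≠ 0) :
    S (n-1) z ^ 2 ≤ (n:ℝ)^2 := by
  rcases hn.lt_or_gt with h | h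
  · obtain ⟨k, rfl⟩ : ∃ k:ℕ, n = -(k:ℤ)-1 := ⟨(-n-1).toNat, by omega⟩
    have e : (-(k:ℤ)-1-1) = (-(k:ℤ)-2) := by ring
    rw [e, S_neg]
    have h1 := Saux_abs_le z hz k
    have h2 : |(-Saux k z)| ≤ (k:ℝ)+1 := by rwa [abs_neg]
    have h3 : ((-(k:ℤ)-1 : ℤ):ℝ) = -((k:ℝ)+1) := by push_cast; ring
    rw [h3]
    calc (-Saux k z)^2 = |(-Saux k z)|^2 := (sq_abs _).symm
    _ ≤ ((k:ℝ)+1)^2 := pow_le_pow_left₀ (abs_nonneg _) h2 2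
    _ = (-((k:ℝ)+1))^2 := by ring
  · obtain ⟨k, rfl⟩ : ∃ k:ℕ, n = (k:ℤ)+1 := ⟨(n-1).toNat, by omega⟩
    have e : ((k:ℤ)+1-1) = ((k:ℕ):ℤ) := by ring
    rw [e, S_ofNat]
    have h1 := Saux_abs_le z hz k
    have h3 : (((k:ℤ)+1 : ℤ):ℝ) = (k:ℝ)+1 := by push_cast; ring
    rw [h3]
    calc (Saux k z)^2 = |Saux k z|^2 := (sq_abs _).symm
    _ ≤ ((k:ℝ)+1)^2 := pow_le_pow_left₀ (abs_nonneg _) h1 2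

set_option maxHeartbeats 1000000 in
theorem stmt12 (m : ℕ) (hm : 0 < m) (n : ℤ) (hn : n ≠ 0) (x y lam alp : ℝ)
    (hlam : lam = 2 + (y - 2) * (y + 2 - x ^ 2) * S ((m : ℤ) - 1) y ^ 2)
    (halp : alp = 1 - (y + 2 - x ^ 2) * S ((m : ℤ) - 1) y * (S ((m : ℤ) - 1) y - S ((m : ℤ) - 2) y))
    (hx2 : |x| ≤ 2)
    (hroot : S (n - 1) lam * alp - S (n - 2) lam = 0)
    (hx : 2 * Real.sqrt (1 - 1 / |4 * (m : ℝ) * (n : ℝ)|) < |x|) :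
    2 < y := by
  by_contra hy2
  push_neg at hy2
  -- notation
  set s := S ((m:ℤ)-1) y with hsdef
  set s' := S ((m:ℤ)-2) y with hs'def
  set A := S (n-1) lam with hAdef
  set B := S (n-2) lam with hBdef
  set M := (m:ℝ) with hMdef
  set N := |(n:ℝ)| with hNdef
  clear_value s s' A B M N
  have hM1 : (1:ℝ) ≤ M := by rw [hMdef]; exact_mod_cast hm
  have hN1 : (1:ℝ) ≤ N := by
    rw [hNdef]
    have h1 : (1:ℤ) ≤ |n| := Int.one_le_abs (by omega)
    calc (1:ℝ) ≤ ((|n|:ℤ):ℝ) := by exact_mod_cast h1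
    _ = |(n:ℝ)| := by push_cast; ring
  have hMN : (1:ℝ) ≤ M*N := by nlinarith
  have hMNpos : (0:ℝ) < M*N := by linarith
  -- turn hx into x^2 > 4 - 1/(M*N)
  have habs : |4*M*(n:ℝ)| = 4*(M*N) := by
    rw [abs_mul, abs_mul]
    rw [hNdef, hMdef]
    rw [abs_of_nonneg (by norm_num : (0:ℝ) ≤ 4), abs_of_nonneg (by positivity : (0:ℝ) ≤ (m:ℝ))]
    ring
  rw [habs] at hx
  have hu0 : (0:ℝ) ≤ 1 - 1/(4*(M*N)) := by
    have h4 : (0:ℝ) < 4*(M*N) := by linarith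
    have h5 : 1/(4*(M*N)) ≤ 1 := by
      rw [div_le_one h4]; linarith
    linarith
  have hxsq : 4 - 1/(M*N) < x^2 := by
    have h1 : (2 * Real.sqrt (1 - 1/(4*(M*N))))^2 < |x|^2 := by
      apply pow_lt_pow_left₀ hx (by positivity) (by norm_num)
    rw [mul_pow, Real.sq_sqrt hu0, sq_abs] at h1
    have h2 : (2:ℝ)^2 * (1 - 1/(4*(M*N))) = 4 - 1/(M*N) := by
      field_simp
      ring
    linarith [h2 ▸ h1]
  have hx3 : 3 < x^2 := by
    have : 1/(M*N) ≤ 1 := by rw [div_le_one hMNpos]; linarith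
    linarith
  have hx4 : x^2 ≤ 4 := by
    have := pow_le_pow_left₀ (abs_nonneg x) hx2 2
    rw [sq_abs] at this
    linarith [this]
  -- the key algebraic identity
  have hidm := S_ident y ((m:ℤ)-1)
  have em : ((m:ℤ)-1-1) = ((m:ℤ)-2) := by ring
  rw [em] at hidm
  rw [← hsdef, ← hs'def] at hidm
  have hidn := S_ident lam (n-1)
  have en : (n-1-1) = (n-2) := by ring
  rw [en] at hidn
  rw [← hAdef, ← hBdef] at hidn
  have hQ : A^2 * (1 + alp^2 - lam*alp) = 1 := by
    linear_combination hidn + (alp*A + B - lam*A) * hroot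
  rw [hlam, halp] at hQ
  have key : A^2 * ((y+2-x^2) * s^2 *
      (((y+2-x^2) + (2-y)) - (2-y)*(y+2-x^2)*s^2)) = 1 := by
    linear_combination hQ - (A^2*(y+2-x^2)^2*s^2) * hidm
  clear hQ hidn hidm hroot halp hx hu0 habs
  set t := y + 2 - x^2 with htdef
  set d := 2 - y with hddef
  clear_value t d
  have hd0 : (0:ℝ) ≤ d := by rw [hddef]; linarith
  have htd : t + d = 4 - x^2 := by rw [htdef, hddef]; ring
  have ht : (0:ℝ) < t := by
    by_contra hcon
    push_neg at hcon
    have h1 : t * s^2 ≤ 0 := mul_nonpos_of_nonpos_of_nonneg hcon (sq_nonneg s)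
    have h2 : (0:ℝ) ≤ (t + d) - d*t*s^2 := by nlinarith [sq_nonneg s]
    nlinarith [mul_nonneg (sq_nonneg A) h2, key, h1]
  have hts : (0:ℝ) < t * s^2 := by
    rcases (mul_nonneg ht.le (sq_nonneg s)).lt_or_eq with h | h
    · exact h
    · exfalso
      rw [← h, zero_mul, mul_zero] at key
      exact absurd key (by norm_num)
  have hA2 : (0:ℝ) < A^2 := by
    rcases (sq_nonneg A).lt_or_eq with h | h
    · exact h
    · exfalso
      rw [← h, zero_mul] at key
      exact absurd key (by norm_num)
  have hP : (0:ℝ) < (t + d) - d*t*s^2 := by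
    by_contra hcon
    push_neg at hcon
    nlinarith [key, mul_pos hA2 hts]
  -- lam is in [-2,2]
  have hlam2 : |lam| ≤ 2 := by
    rw [hlam, abs_le]
    constructor
    · nlinarith [mul_nonneg (mul_nonneg hd0 ht.le) (sq_nonneg s), hP, htd, hx3]
    · nlinarith [mul_nonneg (mul_nonneg hd0 ht.le) (sq_nonneg s)]
  have hA2n : A^2 ≤ (n:ℝ)^2 := by
    have h := S_sq_le lam hlam2 n hn
    rwa [← hAdef] at h
  -- |y| ≤ 2 and s^2 ≤ M^2
  have hy1 : (1:ℝ) < y := by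
    have : y = t + x^2 - 2 := by rw [htdef]; ring
    nlinarith [ht, hx3]
  have hyabs : |y| ≤ 2 := by rw [abs_le]; constructor <;> linarith
  have hs2 : s^2 ≤ M^2 := by
    have h := S_sq_le y hyabs (m:ℤ) (by exact_mod_cast hm.ne')
    have e : (((m:ℤ)):ℝ) = M := by rw [hMdef]; push_cast; ring
    rw [e, ← hsdef] at h
    exact h
  -- final chain
  have c1 : t*s^2 ≤ (t+d)*M^2 := by nlinarith [hs2, ht, hd0, sq_nonneg s]
  have c2 : (t + d) - d*t*s^2 ≤ t + d := by
    nlinarith [mul_nonneg (mul_nonneg hd0 ht.le) (sq_nonneg s)]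
  have c3 : (1:ℝ) ≤ (n:ℝ)^2 * ((t+d)*M^2 * (t+d)) := by
    calc (1:ℝ) = A^2 * (t*s^2 * ((t+d) - d*t*s^2)) := key.symm
    _ ≤ (n:ℝ)^2 * (t*s^2 * ((t+d) - d*t*s^2)) :=
        mul_le_mul_of_nonneg_right hA2n (mul_pos hts hP).le
    _ ≤ (n:ℝ)^2 * ((t+d)*M^2 * (t+d)) := by
        apply mul_le_mul_of_nonneg_left _ (sq_nonneg _)
        exact mul_le_mul c1 c2 hP.le (by positivity)
  have c3' : (1:ℝ) ≤ (M*N*(t+d))^2 := by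
    have hNN : N^2 = (n:ℝ)^2 := by rw [hNdef]; exact sq_abs _
    calc (1:ℝ) ≤ (n:ℝ)^2 * ((t+d)*M^2 * (t+d)) := c3
    _ = (M*N*(t+d))^2 := by rw [← hNN]; ring
  have htd1 : M*N*(t+d) < 1 := by
    rw [htd]
    have h : 4 - x^2 < 1/(M*N) := by linarith
    calc M*N*(4-x^2) < M*N*(1/(M*N)) := by
          exact mul_lt_mul_of_pos_left h hMNpos
    _ = 1 := by field_simp
  have htd0 : (0:ℝ) ≤ M*N*(t+d) := by
    apply mul_nonneg hMNpos.le
    rw [htd]; linarith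
  nlinarith [c3', htd1, htd0]
end

section
/- Let m ≥ 0 be an integer and let n be an integer with n ∉ {0, 1, 2}. Let x be a real number with |x| ≥ 2·cos(π/(4m+2)). Then there exists a real number y with y > x^2 - 2 such that φ(x,y) = 0, where φ(x,y) = S_{n-1}(λ)·α - S_{n-2}(λ) with λ = x^2 - y - (y-2)(y+2-x^2)·S_m(y)·S_{m-1}(y) and α = 1 + (y+2-x^2)·S_{m-1}(y)·(S_m(y) - S_{m-1}(y)). -/
open Real

lemma saux_succ_succ (k : ℕ) (z : ℝ) : Saux (k + 2) z = z * Saux (k + 1) z - Saux k z := rfl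

lemma saux_cont : ∀ j : ℕ, Continuous (fun z : ℝ => Saux j z) := by
  have H : ∀ j : ℕ, Continuous (fun z : ℝ => Saux j z) ∧
      Continuous (fun z : ℝ => Saux (j + 1) z) := by
    intro j
    induction j with
    | zero => exact ⟨continuous_const, continuous_id⟩
    | succ k ih =>
      refine ⟨ih.2, ?_⟩
      have e : (fun z : ℝ => Saux (k + 2) z) = fun z : ℝ => z * Saux (k + 1) z - Saux k z := rfl
      exact e ▸ ((continuous_id.mul ih.2).sub ih.1)
  exact fun j => (H j).1

lemma S_cont (j : ℤ) : Continuous (fun z : ℝ => S j z) := by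
  unfold S
  split_ifs
  · exact saux_cont _
  · exact continuous_const
  · exact (saux_cont _).neg

lemma S_natCast (j : ℕ) (z : ℝ) : S (j : ℤ) z = Saux j z := by
  simp [S]

lemma S_negCast (j : ℤ) (k : ℕ) (h : j = -(k : ℤ) - 2) (z : ℝ) : S j z = -Saux k z := by
  subst h
  rw [S, if_neg (by omega), if_neg (by omega)]
  have e : (-(-(k : ℤ) - 2) - 2).toNat = k := by omega
  rw [e]

lemma saux_sin (θ : ℝ) : ∀ j : ℕ, Saux j (2 * Real.cos θ) * Real.sin θ
    = Real.sin (((j : ℝ) + 1) * θ) := by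
  have H : ∀ j : ℕ, Saux j (2 * Real.cos θ) * Real.sin θ = Real.sin (((j : ℝ) + 1) * θ) ∧
      Saux (j + 1) (2 * Real.cos θ) * Real.sin θ = Real.sin (((j : ℝ) + 2) * θ) := by
    intro j
    induction j with
    | zero =>
      constructor
      · show (1 : ℝ) * Real.sin θ = _
        push_cast
        norm_num
      · show (2 * Real.cos θ) * Real.sin θ = _
        push_cast
        rw [show ((0 : ℝ) + 2) * θ = θ + θ by ring, Real.sin_add]
        ring
    | succ k ih =>
      constructor
      · have e : ((k + 1 : ℕ) : ℝ) + 1 = (k : ℝ) + 2 := by push_cast; ring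
        rw [e]
        exact ih.2
      · rw [saux_succ_succ]
        have h1 := ih.1
        have h2 := ih.2
        have e1 : ((k : ℝ) + 1 + 2) * θ = ((k : ℝ) + 2) * θ + θ := by ring
        have e2 : ((k : ℝ) + 1) * θ = ((k : ℝ) + 2) * θ - θ := by ring
        have hadd := Real.sin_add (((k : ℝ) + 2) * θ) θ
        have hsub := Real.sin_sub (((k : ℝ) + 2) * θ) θ
        push_cast
        rw [e1, hadd]
        push_cast at h1 h2
        rw [e2, hsub] at h1
        linear_combination 2 * Real.cos θ * h2 - h1
  exact fun j => (H j).1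

lemma saux_two : ∀ j : ℕ, Saux j (2 : ℝ) = (j : ℝ) + 1 := by
  have H : ∀ j : ℕ, Saux j (2 : ℝ) = (j : ℝ) + 1 ∧ Saux (j + 1) (2 : ℝ) = (j : ℝ) + 2 := by
    intro j
    induction j with
    | zero => exact ⟨by norm_num [Saux], by norm_num [Saux]⟩
    | succ k ih =>
      refine ⟨by push_cast; linarith [ih.2], ?_⟩
      rw [saux_succ_succ]
      push_cast
      rw [ih.1, ih.2]
      ring
  exact fun j => (H j).1

lemma saux_ge : ∀ j : ℕ, ∀ y : ℝ, 2 ≤ y → 1 ≤ Saux j y ∧ Saux j y ≤ Saux (j + 1) y := by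
  intro j
  induction j with
  | zero => exact fun y hy => ⟨le_refl _, by show (1 : ℝ) ≤ y; linarith⟩
  | succ k ih =>
    intro y hy
    obtain ⟨h1, h2⟩ := ih y hy
    refine ⟨by linarith, ?_⟩
    rw [saux_succ_succ]
    nlinarith

/-- Nonnegativity / monotonicity facts about `S m` and `S (m-1)` for `y ≥ 2`. -/
lemma S_facts (m : ℕ) (z : ℝ) (hz : 2 ≤ z) :
    0 ≤ S ((m : ℤ) - 1) z ∧ S ((m : ℤ) - 1) z ≤ S (m : ℤ) z := by
  cases m with
  | zero =>
    norm_num [S, Saux]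
  | succ k =>
    have e : ((k + 1 : ℕ) : ℤ) - 1 = (k : ℤ) := by push_cast; ring
    rw [e, S_natCast, S_natCast]
    obtain ⟨h1, h2⟩ := saux_ge k z hz
    exact ⟨by linarith, h2⟩

lemma main_aux (m : ℕ) (x : ℝ) (P Q : ℝ → ℝ) (hP : Continuous P) (hQ : Continuous Q)
    (hval : P 2 - Q 2 = 1) (c : ℝ) (hc0 : 0 ≤ c) (hc2 : c < 2)
    (hPc : P c = 0) (hQc : Q c = 1) :
    ∃ y : ℝ, x ^ 2 - 2 < y ∧
      P (x ^ 2 - y - (y - 2) * (y + 2 - x ^ 2) * S (m : ℤ) y * S ((m : ℤ) - 1) y) *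
      (1 + (y + 2 - x ^ 2) * S ((m : ℤ) - 1) y * (S (m : ℤ) y - S ((m : ℤ) - 1) y)) -
      Q (x ^ 2 - y - (y - 2) * (y + 2 - x ^ 2) * S (m : ℤ) y * S ((m : ℤ) - 1) y) = 0 := by
  set a : ℝ := x ^ 2 - 2 with ha_def
  set b : ℝ := max 2 (x ^ 2) + 1 with hb_def
  set g : ℝ → ℝ :=
    fun y => x ^ 2 - y - (y - 2) * (y + 2 - x ^ 2) * S (m : ℤ) y * S ((m : ℤ) - 1) y with hg_def
  set A : ℝ → ℝ :=
    fun y => 1 + (y + 2 - x ^ 2) * S ((m : ℤ) - 1) y * (S (m : ℤ) y - S ((m : ℤ) - 1) y)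
    with hA_def
  have hSm : Continuous fun y : ℝ => S (m : ℤ) y := S_cont _
  have hSm1 : Continuous fun y : ℝ => S ((m : ℤ) - 1) y := S_cont _
  have hg : Continuous g := by
    apply Continuous.sub
    · exact (continuous_const.sub continuous_id)
    · exact ((((continuous_id.sub continuous_const).mul
        ((continuous_id.add continuous_const).sub continuous_const)).mul hSm).mul hSm1)
  have hA : Continuous A := by
    apply Continuous.add continuous_const
    exact (((continuous_id.add continuous_const).sub continuous_const).mul hSm1).mul
      (hSm.sub hSm1)
  have hb2 : (2 : ℝ) ≤ b := by
    have := le_max_left 2 (x ^ 2); simp only [hb_def]; linarith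
  have hbx : x ^ 2 + 1 ≤ b := by
    have := le_max_right 2 (x ^ 2); simp only [hb_def]; linarith
  have hab : a ≤ b := by simp only [ha_def]; linarith
  have hga : g a = 2 := by
    show x ^ 2 - (x ^ 2 - 2) - ((x ^ 2 - 2) - 2) * ((x ^ 2 - 2) + 2 - x ^ 2) *
      S (m : ℤ) (x ^ 2 - 2) * S ((m : ℤ) - 1) (x ^ 2 - 2) = 2
    ring
  have hAa : A a = 1 := by
    show 1 + ((x ^ 2 - 2) + 2 - x ^ 2) * S ((m : ℤ) - 1) (x ^ 2 - 2) *
      (S (m : ℤ) (x ^ 2 - 2) - S ((m : ℤ) - 1) (x ^ 2 - 2)) = 1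
    ring
  have hfacts := S_facts m b hb2
  have hprod : 0 ≤ (b - 2) * (b + 2 - x ^ 2) * S (m : ℤ) b * S ((m : ℤ) - 1) b := by
    apply mul_nonneg (mul_nonneg (mul_nonneg (by linarith) (by linarith)) _) hfacts.1
    linarith [hfacts.1, hfacts.2]
  have hgb : g b ≤ -1 := by
    show x ^ 2 - b - (b - 2) * (b + 2 - x ^ 2) * S (m : ℤ) b * S ((m : ℤ) - 1) b ≤ -1
    linarith
  -- first IVT: find y₁ with g y₁ = c
  have hmem : c ∈ Set.Icc (g b) (g a) := ⟨by linarith, by rw [hga]; linarith⟩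
  obtain ⟨y₁, hy₁mem, hy₁⟩ := intermediate_value_Icc' hab hg.continuousOn hmem
  have hay₁ : a < y₁ := by
    rcases eq_or_lt_of_le hy₁mem.1 with h | h
    · exfalso; rw [← h, hga] at hy₁; linarith
    · exact h
  -- second IVT on F
  set F : ℝ → ℝ := fun y => P (g y) * A y - Q (g y) with hF_def
  have hF : Continuous F := ((hP.comp hg).mul hA).sub (hQ.comp hg)
  have hFa : F a = 1 := by
    show P (g a) * A a - Q (g a) = 1
    rw [hga, hAa, mul_one, hval]
  have hFy₁ : F y₁ = -1 := by
    show P (g y₁) * A y₁ - Q (g y₁) = -1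
    rw [hy₁, hPc, hQc, zero_mul, zero_sub]
  have hmem0 : (0 : ℝ) ∈ Set.Icc (F y₁) (F a) := by rw [hFa, hFy₁]; norm_num
  obtain ⟨y, hymem, hy⟩ := intermediate_value_Icc' (le_of_lt hay₁) hF.continuousOn hmem0
  have hay : a < y := by
    rcases eq_or_lt_of_le hymem.1 with h | h
    · exfalso; rw [← h, hFa] at hy; linarith
    · exact h
  exact ⟨y, hay, hy⟩

theorem stmt14 (m : ℕ) (n : ℤ) (hn0 : n ≠ 0) (hn1 : n ≠ 1) (hn2 : n ≠ 2) (x : ℝ)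
    (hx : 2 * Real.cos (Real.pi / (4 * (m : ℝ) + 2)) ≤ |x|) :
    ∃ y : ℝ, x ^ 2 - 2 < y ∧
      S (n - 1) (x ^ 2 - y - (y - 2) * (y + 2 - x ^ 2) * S (m : ℤ) y * S ((m : ℤ) - 1) y) *
      (1 + (y + 2 - x ^ 2) * S ((m : ℤ) - 1) y * (S (m : ℤ) y - S ((m : ℤ) - 1) y)) -
      S (n - 2) (x ^ 2 - y - (y - 2) * (y + 2 - x ^ 2) * S (m : ℤ) y * S ((m : ℤ) - 1) y) = 0 := by
  clear hx
  -- split into three cases on n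
  by_cases hneg1 : n = -1
  · -- n = -1 : the expression is g y - A y (up to sign)
    subst hneg1
    set a : ℝ := x ^ 2 - 2 with ha_def
    set b : ℝ := max 2 (x ^ 2) + 1 with hb_def
    set g : ℝ → ℝ :=
      fun y => x ^ 2 - y - (y - 2) * (y + 2 - x ^ 2) * S (m : ℤ) y * S ((m : ℤ) - 1) y with hg_def
    set A : ℝ → ℝ :=
      fun y => 1 + (y + 2 - x ^ 2) * S ((m : ℤ) - 1) y * (S (m : ℤ) y - S ((m : ℤ) - 1) y)
      with hA_def
    have hSm : Continuous fun y : ℝ => S (m : ℤ) y := S_cont _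
    have hSm1 : Continuous fun y : ℝ => S ((m : ℤ) - 1) y := S_cont _
    have hg : Continuous g := by
      apply Continuous.sub
      · exact (continuous_const.sub continuous_id)
      · exact ((((continuous_id.sub continuous_const).mul
          ((continuous_id.add continuous_const).sub continuous_const)).mul hSm).mul hSm1)
    have hA : Continuous A := by
      apply Continuous.add continuous_const
      exact (((continuous_id.add continuous_const).sub continuous_const).mul hSm1).mul
        (hSm.sub hSm1)
    have hb2 : (2 : ℝ) ≤ b := by
      have := le_max_left 2 (x ^ 2); simp only [hb_def]; linarith
    have hbx : x ^ 2 + 1 ≤ b := by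
      have := le_max_right 2 (x ^ 2); simp only [hb_def]; linarith
    have hab : a ≤ b := by simp only [ha_def]; linarith
    have hga : g a = 2 := by
      show x ^ 2 - (x ^ 2 - 2) - ((x ^ 2 - 2) - 2) * ((x ^ 2 - 2) + 2 - x ^ 2) *
        S (m : ℤ) (x ^ 2 - 2) * S ((m : ℤ) - 1) (x ^ 2 - 2) = 2
      ring
    have hAa : A a = 1 := by
      show 1 + ((x ^ 2 - 2) + 2 - x ^ 2) * S ((m : ℤ) - 1) (x ^ 2 - 2) *
        (S (m : ℤ) (x ^ 2 - 2) - S ((m : ℤ) - 1) (x ^ 2 - 2)) = 1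
      ring
    have hfacts := S_facts m b hb2
    have hprod : 0 ≤ (b - 2) * (b + 2 - x ^ 2) * S (m : ℤ) b * S ((m : ℤ) - 1) b := by
      apply mul_nonneg (mul_nonneg (mul_nonneg (by linarith) (by linarith)) _) hfacts.1
      linarith [hfacts.1, hfacts.2]
    have hgb : g b ≤ -1 := by
      show x ^ 2 - b - (b - 2) * (b + 2 - x ^ 2) * S (m : ℤ) b * S ((m : ℤ) - 1) b ≤ -1
      linarith
    have hAb : 1 ≤ A b := by
      show 1 ≤ 1 + (b + 2 - x ^ 2) * S ((m : ℤ) - 1) b * (S (m : ℤ) b - S ((m : ℤ) - 1) b)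
      have h := mul_nonneg (mul_nonneg (by linarith : (0 : ℝ) ≤ b + 2 - x ^ 2) hfacts.1)
        (by linarith [hfacts.2] : (0 : ℝ) ≤ S (m : ℤ) b - S ((m : ℤ) - 1) b)
      linarith
    set F : ℝ → ℝ := fun y => g y - A y with hF_def
    have hF : Continuous F := hg.sub hA
    have hFa : F a = 1 := by show g a - A a = 1; rw [hga, hAa]; norm_num
    have hFb : F b ≤ -2 := by show g b - A b ≤ -2; linarith
    have hmem0 : (0 : ℝ) ∈ Set.Icc (F b) (F a) := by rw [hFa]; exact ⟨by linarith, by linarith⟩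
    obtain ⟨y, hymem, hy⟩ := intermediate_value_Icc' hab hF.continuousOn hmem0
    have hay : a < y := by
      rcases eq_or_lt_of_le hymem.1 with h | h
      · exfalso; rw [← h, hFa] at hy; linarith
      · exact h
    refine ⟨y, hay, ?_⟩
    have hS2 : S (-1 - 1 : ℤ) (g y) = -1 := by
      rw [S_negCast (-1 - 1) 0 (by norm_num)]
      norm_num [Saux]
    have hS3 : S (-1 - 2 : ℤ) (g y) = -(g y) := by
      rw [S_negCast (-1 - 2) 1 (by norm_num)]
      norm_num [Saux]
    have hy' : g y - A y = 0 := hy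
    show S (-1 - 1 : ℤ) (g y) * A y - S (-1 - 2 : ℤ) (g y) = 0
    rw [hS2, hS3]
    linarith
  · -- n ≥ 3 or n ≤ -2 : both handled via main_aux with c = 2 cos (π / N)
    have hN : ∃ N : ℕ, 2 ≤ N ∧
        ((n - 1 = ((N - 1 : ℕ) : ℤ) ∧ n - 2 = ((N - 2 : ℕ) : ℤ)) ∨
         (n - 1 = -((N - 1 : ℕ) : ℤ) - 2 ∧ n - 2 = -((N : ℕ) : ℤ) - 2)) := by
      rcases lt_or_ge n 0 with h | h
      · exact ⟨(-n).toNat, by omega, Or.inr ⟨by omega, by omega⟩⟩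
      · exact ⟨n.toNat, by omega, Or.inl ⟨by omega, by omega⟩⟩
    obtain ⟨N, hN2, hcase⟩ := hN
    set θ : ℝ := π / N with hθ_def
    have hNR : (2 : ℝ) ≤ (N : ℝ) := by exact_mod_cast hN2
    have hNpos : (0 : ℝ) < (N : ℝ) := by linarith
    have hθpos : 0 < θ := div_pos pi_pos hNpos
    have hθle : θ ≤ π / 2 := by
      rw [hθ_def, div_le_div_iff₀ hNpos two_pos]
      nlinarith [pi_pos]
    have hθlt : θ < π := by linarith [pi_pos]
    have hsin : 0 < Real.sin θ := Real.sin_pos_of_pos_of_lt_pi hθpos hθlt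
    set c : ℝ := 2 * Real.cos θ with hc_def
    have hc0 : 0 ≤ c := by
      have := Real.cos_nonneg_of_mem_Icc (x := θ) ⟨by linarith, hθle⟩
      simp only [hc_def]; linarith
    have hc2 : c < 2 := by
      have h := Real.cos_lt_cos_of_nonneg_of_le_pi (le_refl (0 : ℝ)) (le_of_lt hθlt) hθpos
      rw [Real.cos_zero] at h
      simp only [hc_def]; linarith
    have hNθ : (N : ℝ) * θ = π := by
      rw [hθ_def]; field_simp
    have hsval : ∀ j : ℕ, Saux j c * Real.sin θ = Real.sin (((j : ℝ) + 1) * θ) := saux_sin θ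
    have e1 : (((N - 1 : ℕ)) : ℝ) + 1 = (N : ℝ) := by
      push_cast [show (1 : ℕ) ≤ N by omega]; ring
    have e2 : (((N - 2 : ℕ)) : ℝ) + 1 = (N : ℝ) - 1 := by
      push_cast [hN2]; ring
    have hS1 : Saux (N - 1) c = 0 := by
      have h := hsval (N - 1)
      rw [e1, hNθ, Real.sin_pi] at h
      exact (mul_eq_zero.mp h).resolve_right (ne_of_gt hsin)
    have hS2 : Saux (N - 2) c = 1 := by
      have h := hsval (N - 2)
      rw [e2] at h
      have e : ((N : ℝ) - 1) * θ = π - θ := by rw [← hNθ]; ring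
      rw [e, Real.sin_pi_sub] at h
      have := mul_right_cancel₀ (ne_of_gt hsin) (h.trans (one_mul (Real.sin θ)).symm)
      exact this
    have hS3 : Saux N c = -1 := by
      have h := hsval N
      have e : ((N : ℝ) + 1) * θ = π + θ := by rw [← hNθ]; ring
      rw [e] at h
      have hpa : Real.sin (π + θ) = -Real.sin θ := by
        rw [Real.sin_add, Real.sin_pi, Real.cos_pi]; ring
      rw [hpa] at h
      exact mul_right_cancel₀ (ne_of_gt hsin)
        (h.trans (by ring : -Real.sin θ = (-1) * Real.sin θ))
    rcases hcase with ⟨h1, h2⟩ | ⟨h1, h2⟩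
    · refine main_aux m x (fun z => S (n - 1) z) (fun z => S (n - 2) z)
        (S_cont _) (S_cont _) ?_ c hc0 hc2 ?_ ?_
      · show S (n - 1) 2 - S (n - 2) 2 = 1
        rw [h1, h2, S_natCast, S_natCast, saux_two, saux_two]
        linarith [e1, e2]
      · show S (n - 1) c = 0
        rw [h1, S_natCast]; exact hS1
      · show S (n - 2) c = 1
        rw [h2, S_natCast]; exact hS2
    · refine main_aux m x (fun z => S (n - 1) z) (fun z => S (n - 2) z)
        (S_cont _) (S_cont _) ?_ c hc0 hc2 ?_ ?_
      · show S (n - 1) 2 - S (n - 2) 2 = 1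
        rw [S_negCast _ _ h1, S_negCast _ _ h2, saux_two, saux_two]
        push_cast
        linarith [e1]
      · show S (n - 1) c = 0
        rw [S_negCast _ _ h1, hS1]; ring
      · show S (n - 2) c = 1
        rw [S_negCast _ _ h2, hS3]; ring
end

section
/- Let m and n be positive integers. For every real number x there exists a real number y such that φ(x,y) = 0, where φ(x,y) = S_{n-1}(λ)·α - S_{n-2}(λ) with λ = 2 + (y-2)(y+2-x^2)·S_{m-1}(y)^2 and α = 1 - (y+2-x^2)·S_{m-1}(y)·(S_{m-1}(y) - S_{m-2}(y)). -/
open Real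

open Polynomial

noncomputable def PP : ℕ → ℝ[X]
  | 0 => 0
  | 1 => 1
  | (k+2) => X * PP (k+1) - PP k

lemma PP_eval (z : ℝ) : ∀ k, (PP (k+1)).eval z = Saux k z := by
  intro k
  induction k using Nat.strong_induction_on with
  | _ k ih =>
    match k with
    | 0 => simp [PP, Saux]
    | 1 => simp [PP, Saux]
    | (k+2) =>
      show (X * PP (k+2) - PP (k+1)).eval z = z * Saux (k+1) z - Saux k z
      simp only [eval_sub, eval_mul, eval_X]
      rw [ih (k+1) (by omega), ih k (by omega)]

lemma S_eq_PP (k : ℕ) (z : ℝ) : S ((k : ℤ) - 1) z = (PP k).eval z := by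
  match k with
  | 0 => simp [S, PP]
  | (k+1) =>
    have h : ((k + 1 : ℕ) : ℤ) - 1 = (k : ℤ) := by push_cast; ring
    rw [h, S, if_pos (by positivity), PP_eval]
    simp

lemma PP_monic : ∀ k, (PP (k+1)).Monic ∧ (PP (k+1)).natDegree = k := by
  intro k
  induction k using Nat.strong_induction_on with
  | _ k ih =>
    match k with
    | 0 => exact ⟨monic_one, by simp [PP]⟩
    | 1 =>
      have h2 : PP 2 = X := by show X * PP 1 - PP 0 = X; simp [PP]
      rw [h2]; exact ⟨monic_X, natDegree_X⟩
    | (k+2) =>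
      obtain ⟨h1m, h1d⟩ := ih (k+1) (by omega)
      obtain ⟨h0m, h0d⟩ := ih k (by omega)
      have hXm : (X * PP (k+2)).Monic := monic_X.mul h1m
      have hXd : (X * PP (k+2)).natDegree = k + 2 := by
        rw [monic_X.natDegree_mul h1m, natDegree_X, h1d]; omega
      have hdlt : (-(PP (k+1))).degree < (X * PP (k+2)).degree := by
        rw [degree_neg, degree_eq_natDegree h0m.ne_zero,
          degree_eq_natDegree hXm.ne_zero, h0d, hXd]
        exact_mod_cast by omega
      have heq : PP (k+3) = X * PP (k+2) + -(PP (k+1)) := by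
        show X * PP (k+2) - PP (k+1) = _; ring
      rw [heq]
      exact ⟨hXm.add_of_left hdlt,
        by rw [natDegree_add_eq_left_of_degree_lt hdlt, hXd]⟩

lemma PP_degree (k : ℕ) : (PP (k+1)).degree = (k : WithBot ℕ) := by
  rw [degree_eq_natDegree (PP_monic k).1.ne_zero, (PP_monic k).2]

lemma PP_degree_lt (k : ℕ) : (PP k).degree < (PP (k+1)).degree := by
  match k with
  | 0 => rw [PP_degree]; show (PP 0).degree < _; simp [PP, degree_zero]
    -- degree 0 poly = ⊥ < 0
  | (k+1) =>
    rw [PP_degree, PP_degree]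
    exact_mod_cast Nat.lt_succ_self k

lemma exists_root_of_monic_odd (G : ℝ[X]) (hG : G.Monic) (hodd : Odd G.natDegree) :
    ∃ y : ℝ, G.eval y = 0 := by
  have hd0 : G.natDegree ≠ 0 := by
    rintro h; rw [h] at hodd; simp [Nat.odd_iff] at hodd
  have hdeg : 0 < G.degree := by
    rw [degree_eq_natDegree hG.ne_zero]
    exact_mod_cast Nat.pos_of_ne_zero hd0
  have htop : Filter.Tendsto (fun y => G.eval y) Filter.atTop Filter.atTop :=
    G.tendsto_atTop_of_leadingCoeff_nonneg hdeg (by rw [hG.leadingCoeff]; norm_num)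
  obtain ⟨a, ha⟩ := (htop.eventually_ge_atTop 0).exists
  set H : ℝ[X] := G.comp (-X) with hH
  have hXd : (-X : ℝ[X]).natDegree = 1 := by simp
  have hHlc : H.leadingCoeff = -1 := by
    rw [hH, leadingCoeff_comp (by rw [hXd]; norm_num), hG.leadingCoeff]
    simp [hodd.neg_one_pow]
  have hHne : H ≠ 0 := fun h => by simp [h] at hHlc
  have hHdeg : 0 < H.degree := by
    rw [degree_eq_natDegree hHne, hH, natDegree_comp, hXd, mul_one]
    exact_mod_cast Nat.pos_of_ne_zero hd0
  have hbot : Filter.Tendsto (fun y => H.eval y) Filter.atTop Filter.atBot :=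
    H.tendsto_atBot_of_leadingCoeff_nonpos hHdeg (by rw [hHlc]; norm_num)
  obtain ⟨b, hb⟩ := (hbot.eventually_le_atBot 0).exists
  have hb' : G.eval (-b) ≤ 0 := by
    have : H.eval b = G.eval (-b) := by simp [hH, eval_comp]
    linarith [hb, this ▸ hb]
  have := intermediate_value_univ (-b) a (f := fun y => G.eval y) G.continuous
  obtain ⟨y, hy⟩ := this ⟨hb', ha⟩
  exact ⟨y, hy⟩

theorem stmt16 (m n : ℕ) (hm : 0 < m) (hn : 0 < n) (x : ℝ) :
    ∃ y : ℝ,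
      S ((n : ℤ) - 1) (2 + (y - 2) * (y + 2 - x ^ 2) * S ((m : ℤ) - 1) y ^ 2) *
      (1 - (y + 2 - x ^ 2) * S ((m : ℤ) - 1) y * (S ((m : ℤ) - 1) y - S ((m : ℤ) - 2) y)) -
      S ((n : ℤ) - 2) (2 + (y - 2) * (y + 2 - x ^ 2) * S ((m : ℤ) - 1) y ^ 2) = 0 := by
  obtain ⟨m, rfl⟩ : ∃ m', m = m' + 1 := ⟨m - 1, by omega⟩
  obtain ⟨n, rfl⟩ : ∃ n', n = n' + 1 := ⟨n - 1, by omega⟩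
  set c : ℝ := 2 - x ^ 2 with hc
  set Pm := PP (m + 1) with hPm
  set Λ : ℝ[X] := C 2 + (X - C 2) * (X + C c) * Pm ^ 2 with hΛ
  set A : ℝ[X] := (X + C c) * Pm * (Pm - PP m) with hA
  have hPmm : Pm.Monic := (PP_monic m).1
  have hPmd : Pm.natDegree = m := (PP_monic m).2
  have hneglt : (-PP m).degree < Pm.degree := by
    rw [degree_neg]; exact PP_degree_lt m
  have hsubm : (Pm - PP m).Monic := by
    rw [sub_eq_add_neg]
    exact hPmm.add_of_left hneglt
  have hsubd : (Pm - PP m).natDegree = m := by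
    rw [sub_eq_add_neg, natDegree_add_eq_left_of_degree_lt hneglt, hPmd]
  have hΛm : Λ.Monic := by
    have hmul : ((X - C 2) * (X + C c) * Pm ^ 2).Monic :=
      ((monic_X_sub_C 2).mul (monic_X_add_C c)).mul (hPmm.pow 2)
    have hmuld : ((X - C 2) * (X + C c) * Pm ^ 2).natDegree = 2 * m + 2 := by
      rw [((monic_X_sub_C 2).mul (monic_X_add_C c)).natDegree_mul (hPmm.pow 2),
        (monic_X_sub_C 2).natDegree_mul (monic_X_add_C c),
        natDegree_X_sub_C, natDegree_X_add_C, hPmm.natDegree_pow, hPmd]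
      ring
    rw [hΛ, add_comm]
    refine hmul.add_of_left ?_
    calc (C (2:ℝ)).degree ≤ 0 := degree_C_le
    _ < _ := by
        rw [degree_eq_natDegree hmul.ne_zero, hmuld]
        exact_mod_cast by omega
  have hΛd : Λ.natDegree = 2 * m + 2 := by
    have hmul : ((X - C 2) * (X + C c) * Pm ^ 2).Monic :=
      ((monic_X_sub_C 2).mul (monic_X_add_C c)).mul (hPmm.pow 2)
    have hmuld : ((X - C 2) * (X + C c) * Pm ^ 2).natDegree = 2 * m + 2 := by
      rw [((monic_X_sub_C 2).mul (monic_X_add_C c)).natDegree_mul (hPmm.pow 2),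
        (monic_X_sub_C 2).natDegree_mul (monic_X_add_C c),
        natDegree_X_sub_C, natDegree_X_add_C, hPmm.natDegree_pow, hPmd]
      ring
    rw [hΛ, add_comm, natDegree_add_eq_left_of_degree_lt, hmuld]
    calc (C (2:ℝ)).degree ≤ 0 := degree_C_le
    _ < _ := by
        rw [degree_eq_natDegree hmul.ne_zero, hmuld]
        exact_mod_cast by omega
  have hΛd0 : Λ.natDegree ≠ 0 := by omega
  have hAm : A.Monic := ((monic_X_add_C c).mul hPmm).mul hsubm
  have hAd : A.natDegree = 2 * m + 1 := by
    rw [((monic_X_add_C c).mul hPmm).natDegree_mul hsubm,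
      (monic_X_add_C c).natDegree_mul hPmm, natDegree_X_add_C, hPmd, hsubd]
    ring
  set Pn := PP (n + 1) with hPn
  have hPnm : Pn.Monic := (PP_monic n).1
  have hPnd : Pn.natDegree = n := (PP_monic n).2
  have hcompm : (Pn.comp Λ).Monic := hPnm.comp hΛm hΛd0
  have hcompd : (Pn.comp Λ).natDegree = n * (2 * m + 2) := by
    rw [natDegree_comp, hPnd, hΛd]
  have hheadm : (Pn.comp Λ * A).Monic := hcompm.mul hAm
  have hheadd : (Pn.comp Λ * A).natDegree = n * (2 * m + 2) + 2 * m + 1 := by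
    rw [hcompm.natDegree_mul hAm, hcompd, hAd]; ring
  set T : ℝ[X] := (PP n).comp Λ - Pn.comp Λ with hT
  have hTdeg : T.degree < (Pn.comp Λ * A).degree := by
    have h1 : ((PP n).comp Λ).degree ≤ (n * (2 * m + 2) : ℕ) := by
      calc ((PP n).comp Λ).degree ≤ ((PP n).comp Λ).natDegree := degree_le_natDegree
      _ ≤ (n * (2 * m + 2) : ℕ) := by
          rw [natDegree_comp, hΛd]
          exact_mod_cast Nat.mul_le_mul_right _ (by
            rcases Nat.eq_zero_or_pos n with h | h
            · subst h; simp [PP]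
            · obtain ⟨n', rfl⟩ : ∃ n'', n = n'' + 1 := ⟨n - 1, by omega⟩
              rw [(PP_monic n').2]; omega)
    have h2 : (Pn.comp Λ).degree ≤ (n * (2 * m + 2) : ℕ) := by
      rw [degree_eq_natDegree hcompm.ne_zero, hcompd]
    have hbig : ((n * (2 * m + 2) : ℕ) : WithBot ℕ) < (Pn.comp Λ * A).degree := by
      rw [degree_eq_natDegree hheadm.ne_zero, hheadd]
      exact_mod_cast by omega
    calc T.degree ≤ max ((PP n).comp Λ).degree (Pn.comp Λ).degree := degree_sub_le _ _
    _ ≤ (n * (2 * m + 2) : ℕ) := max_le h1 h2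
    _ < _ := hbig
  set G : ℝ[X] := Pn.comp Λ * A + T with hG
  have hGm : G.Monic := hheadm.add_of_left hTdeg
  have hGd : G.natDegree = n * (2 * m + 2) + 2 * m + 1 := by
    rw [hG, natDegree_add_eq_left_of_degree_lt hTdeg, hheadd]
  obtain ⟨y, hy⟩ := exists_root_of_monic_odd G hGm (by rw [hGd]; exact ⟨n * (m+1) + m, by ring⟩)
  refine ⟨y, ?_⟩
  have hm2 : ((m + 1 : ℕ) : ℤ) - 2 = ((m : ℕ) : ℤ) - 1 := by push_cast; ring
  have hn2 : ((n + 1 : ℕ) : ℤ) - 2 = ((n : ℕ) : ℤ) - 1 := by push_cast; ring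
  have hSm1 : ∀ z : ℝ, S (((m + 1 : ℕ) : ℤ) - 1) z = Pm.eval z := fun z => S_eq_PP (m+1) z
  have hSm2 : ∀ z : ℝ, S (((m + 1 : ℕ) : ℤ) - 2) z = (PP m).eval z := fun z => by
    rw [hm2]; exact S_eq_PP m z
  have hSn1 : ∀ z : ℝ, S (((n + 1 : ℕ) : ℤ) - 1) z = Pn.eval z := fun z => S_eq_PP (n+1) z
  have hSn2 : ∀ z : ℝ, S (((n + 1 : ℕ) : ℤ) - 2) z = (PP n).eval z := fun z => by
    rw [hn2]; exact S_eq_PP n z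
  rw [hSm1, hSm2, hSn1, hSn2]
  have hΛev : Λ.eval y = 2 + (y - 2) * (y + 2 - x ^ 2) * Pm.eval y ^ 2 := by
    simp only [hΛ, eval_add, eval_mul, eval_sub, eval_pow, eval_X, eval_C, hc]; ring
  have hGev : G.eval y =
      Pn.eval (Λ.eval y) * ((y + 2 - x ^ 2) * Pm.eval y * (Pm.eval y - (PP m).eval y))
      + (PP n).eval (Λ.eval y) - Pn.eval (Λ.eval y) := by
    simp only [hG, hT, hA, eval_add, eval_sub, eval_mul, eval_X, eval_C, eval_comp, hc]; ring
  rw [← hΛev]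
  rw [hGev] at hy
  linarith [hy]
end
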